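/- Let (X, μ) be a measure space, Q ⊆ X measurable with 0 < μ(Q) < ∞, g : Q → [0,∞) measurable, λ > 0, p > 0, ε > 0, and suppose (λ/2)^p ≤ (1/μ(Q)) ∫_Q g^p dμ and (1/μ(Q)) ∫_Q g^{p(1+ε)} dμ ≤ K λ^{p(1+ε)} for some K ≥ 1. Then μ(Q) ≤ c(p, ε, K) · μ({x ∈ Q : g(x) > λ/4}), where c(p, ε, K) = (4^p K / (2^p − 1))^{(1+ε)/ε} · 2^{p(1+ε)/ε} (any explicit constant depending only on p, ε, K suffices). -/

import Mathlib

open MeasureTheory ENNReal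

/-- Abstract density estimate (first alternative of the exit-time argument): if the `p`-average
of `g` on `Q` is at least `(λ/2)^p` and `g` satisfies a reverse Hölder bound at exponent
`p(1+ε)`, then the superlevel set `{g > λ/4}` occupies a definite fraction of `Q`. -/
theorem density_estimate_first_alternative (p ε K : ℝ) (hp : 0 < p) (hε : 0 < ε) (hK : 1 ≤ K) :
    ∃ c : ℝ≥0∞, c ≠ ⊤ ∧
      ∀ (X : Type) [MeasurableSpace X] (μ : Measure X) (Q : Set X),
        MeasurableSet Q → 0 < μ Q → μ Q < ⊤ →
        ∀ g : X → ℝ, Measurable g → (∀ x, 0 ≤ g x) →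
        ∀ lam : ℝ, 0 < lam →
        ENNReal.ofReal (lam/2) ^ p ≤ (μ Q)⁻¹ * ∫⁻ x in Q, ENNReal.ofReal (g x) ^ p ∂μ →
        (μ Q)⁻¹ * ∫⁻ x in Q, ENNReal.ofReal (g x) ^ (p*(1+ε)) ∂μ
          ≤ ENNReal.ofReal K * ENNReal.ofReal lam ^ (p*(1+ε)) →
        μ Q ≤ c * μ {x | x ∈ Q ∧ lam/4 < g x} := by
  have hpε : 0 < p * ε := mul_pos hp hε
  set D : ℝ := (1/2:ℝ) ^ p - (1/4:ℝ) ^ p with hDdef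
  have hD : 0 < D := by
    have h14 : ((1:ℝ)/4) ^ p < ((1:ℝ)/2) ^ p :=
      Real.rpow_lt_rpow (by norm_num) (by norm_num) hp
    simpa [hDdef] using sub_pos.mpr h14
  set M : ℝ := max 1 ((2*K/D) ^ (p*ε)⁻¹) with hMdef
  have hM1 : (1:ℝ) ≤ M := le_max_left _ _
  have hM0 : (0:ℝ) < M := lt_of_lt_of_le one_pos hM1
  have hKD0 : (0:ℝ) ≤ 2*K/D := by positivity
  have hMpow : 2*K/D ≤ M ^ (p*ε) := by
    calc 2*K/D = ((2*K/D) ^ (p*ε)⁻¹) ^ (p*ε) :=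
          (Real.rpow_inv_rpow hKD0 (ne_of_gt hpε)).symm
      _ ≤ M ^ (p*ε) :=
          Real.rpow_le_rpow (Real.rpow_nonneg hKD0 _) (le_max_right _ _) hpε.le
  have hMe0 : (0:ℝ) < M ^ (p*ε) := Real.rpow_pos_of_pos hM0 _
  have hKM : K * (M ^ (p*ε))⁻¹ ≤ D / 2 := by
    rw [div_le_iff₀ hD] at hMpow
    rw [← div_eq_mul_inv, div_le_div_iff₀ hMe0 (by norm_num)]
    nlinarith
  refine ⟨ENNReal.ofReal (2 * M ^ p / D), ENNReal.ofReal_ne_top, ?_⟩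
  intro X _ μ Q hQ hQ0 hQt g hg hg0 lam hlam h1 h2
  have hQ0' : μ Q ≠ 0 := hQ0.ne'
  have hQt' : μ Q ≠ ⊤ := hQt.ne
  set A : Set X := {x | x ∈ Q ∧ lam/4 < g x} with hAdef
  have hAm : MeasurableSet A :=
    (hQ.inter (measurableSet_lt measurable_const hg) : _)
  have hAQ : A ⊆ Q := fun x hx => hx.1
  have hlM : 0 < lam * M := mul_pos hlam hM0
  have hGm : Measurable fun x => ENNReal.ofReal (g x) := hg.ennreal_ofReal
  -- pointwise estimate on Q
  have key : ∀ x ∈ Q, ENNReal.ofReal (g x) ^ p ≤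
      ENNReal.ofReal (lam/4) ^ p
      + A.indicator (fun _ => ENNReal.ofReal (lam*M) ^ p) x
      + ENNReal.ofReal (lam*M) ^ (-(p*ε)) * ENNReal.ofReal (g x) ^ (p*(1+ε)) := by
    intro x hx
    rcases le_or_gt (g x) (lam/4) with h | h
    · have hle : ENNReal.ofReal (g x) ^ p ≤ ENNReal.ofReal (lam/4) ^ p :=
        ENNReal.rpow_le_rpow (ENNReal.ofReal_le_ofReal h) hp.le
      exact hle.trans (le_self_add.trans le_self_add)
    rcases le_or_gt (g x) (lam*M) with h' | h'
    · have hxA : x ∈ A := ⟨hx, h⟩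
      have hle : ENNReal.ofReal (g x) ^ p ≤ ENNReal.ofReal (lam*M) ^ p :=
        ENNReal.rpow_le_rpow (ENNReal.ofReal_le_ofReal h') hp.le
      rw [Set.indicator_of_mem hxA]
      exact hle.trans (le_add_self.trans le_self_add)
    · have hG0 : ENNReal.ofReal (g x) ≠ 0 :=
        (ENNReal.ofReal_pos.mpr (hlM.trans h')).ne'
      have hGt : ENNReal.ofReal (g x) ≠ ⊤ := ENNReal.ofReal_ne_top
      have hSG : ENNReal.ofReal (lam*M) ^ (p*ε) ≤ ENNReal.ofReal (g x) ^ (p*ε) :=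
        ENNReal.rpow_le_rpow (ENNReal.ofReal_le_ofReal h'.le) hpε.le
      have step : ENNReal.ofReal (g x) ^ (-(p*ε)) ≤ ENNReal.ofReal (lam*M) ^ (-(p*ε)) := by
        rw [ENNReal.rpow_neg, ENNReal.rpow_neg]
        exact ENNReal.inv_le_inv.mpr hSG
      have hsplit : ENNReal.ofReal (g x) ^ p
          = ENNReal.ofReal (g x) ^ (-(p*ε)) * ENNReal.ofReal (g x) ^ (p*(1+ε)) := by
        rw [← ENNReal.rpow_add _ _ hG0 hGt]
        congr 1
        ring
      rw [hsplit]
      exact (mul_le_mul_left step _).trans le_add_self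
  -- integrate the pointwise estimate
  have hmeas3 : Measurable fun x => ENNReal.ofReal (g x) ^ (p*(1+ε)) :=
    hGm.pow_const _
  have hint : (∫⁻ x in Q, ENNReal.ofReal (g x) ^ p ∂μ)
      ≤ ENNReal.ofReal (lam/4) ^ p * μ Q
        + ENNReal.ofReal (lam*M) ^ p * μ A
        + ENNReal.ofReal (lam*M) ^ (-(p*ε))
            * ∫⁻ x in Q, ENNReal.ofReal (g x) ^ (p*(1+ε)) ∂μ := by
    calc (∫⁻ x in Q, ENNReal.ofReal (g x) ^ p ∂μ)
        ≤ ∫⁻ x in Q, (ENNReal.ofReal (lam/4) ^ p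
            + A.indicator (fun _ => ENNReal.ofReal (lam*M) ^ p) x
            + ENNReal.ofReal (lam*M) ^ (-(p*ε)) * ENNReal.ofReal (g x) ^ (p*(1+ε))) ∂μ :=
          setLIntegral_mono' hQ key
      _ = (∫⁻ x in Q, (ENNReal.ofReal (lam/4) ^ p
            + A.indicator (fun _ => ENNReal.ofReal (lam*M) ^ p) x) ∂μ)
          + ∫⁻ x in Q, ENNReal.ofReal (lam*M) ^ (-(p*ε))
              * ENNReal.ofReal (g x) ^ (p*(1+ε)) ∂μ := by
          rw [lintegral_add_right]
          exact (hmeas3.const_mul _)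
      _ = ((∫⁻ _x in Q, ENNReal.ofReal (lam/4) ^ p ∂μ)
            + ∫⁻ x in Q, A.indicator (fun _ => ENNReal.ofReal (lam*M) ^ p) x ∂μ)
          + ENNReal.ofReal (lam*M) ^ (-(p*ε))
              * ∫⁻ x in Q, ENNReal.ofReal (g x) ^ (p*(1+ε)) ∂μ := by
          rw [lintegral_add_right _ (measurable_const.indicator hAm), lintegral_const_mul _ hmeas3]
      _ = ENNReal.ofReal (lam/4) ^ p * μ Q
          + ENNReal.ofReal (lam*M) ^ p * μ A
          + ENNReal.ofReal (lam*M) ^ (-(p*ε))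
              * ∫⁻ x in Q, ENNReal.ofReal (g x) ^ (p*(1+ε)) ∂μ := by
          rw [setLIntegral_const, lintegral_indicator hAm, setLIntegral_const,
            Measure.restrict_apply hAm, Set.inter_eq_self_of_subset_left hAQ]
  -- rewrite the hypotheses
  have hI : ENNReal.ofReal (lam/2) ^ p * μ Q ≤ ∫⁻ x in Q, ENNReal.ofReal (g x) ^ p ∂μ := by
    calc ENNReal.ofReal (lam/2) ^ p * μ Q
        ≤ ((μ Q)⁻¹ * ∫⁻ x in Q, ENNReal.ofReal (g x) ^ p ∂μ) * μ Q := mul_le_mul_left h1 _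
      _ = ∫⁻ x in Q, ENNReal.ofReal (g x) ^ p ∂μ := by
          rw [mul_comm, ← mul_assoc, ENNReal.mul_inv_cancel hQ0' hQt', one_mul]
  have hJ : (∫⁻ x in Q, ENNReal.ofReal (g x) ^ (p*(1+ε)) ∂μ)
      ≤ (ENNReal.ofReal K * ENNReal.ofReal lam ^ (p*(1+ε))) * μ Q := by
    calc (∫⁻ x in Q, ENNReal.ofReal (g x) ^ (p*(1+ε)) ∂μ)
        = μ Q * ((μ Q)⁻¹ * ∫⁻ x in Q, ENNReal.ofReal (g x) ^ (p*(1+ε)) ∂μ) := by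
          rw [← mul_assoc, ENNReal.mul_inv_cancel hQ0' hQt', one_mul]
      _ ≤ μ Q * (ENNReal.ofReal K * ENNReal.ofReal lam ^ (p*(1+ε))) := mul_le_mul_right h2 _
      _ = (ENNReal.ofReal K * ENNReal.ofReal lam ^ (p*(1+ε))) * μ Q := mul_comm _ _
  -- the combined ENNReal inequality
  set er : ℝ := (lam/4)^p + (lam*M)^(-(p*ε)) * (K * lam^(p*(1+ε))) with herdef
  have her0 : 0 ≤ er := by positivity
  have hE : ENNReal.ofReal (lam/4) ^ p
      + ENNReal.ofReal (lam*M) ^ (-(p*ε))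
          * (ENNReal.ofReal K * ENNReal.ofReal lam ^ (p*(1+ε)))
      = ENNReal.ofReal er := by
    rw [ENNReal.ofReal_rpow_of_pos (by positivity), ENNReal.ofReal_rpow_of_pos hlM,
      ENNReal.ofReal_rpow_of_pos hlam,
      ← ENNReal.ofReal_mul (by positivity : (0:ℝ) ≤ K),
      ← ENNReal.ofReal_mul (by positivity : (0:ℝ) ≤ (lam*M)^(-(p*ε))),
      ← ENNReal.ofReal_add (by positivity) (by positivity)]
  have main : ENNReal.ofReal (lam/2) ^ p * μ Q
      ≤ ENNReal.ofReal er * μ Q + ENNReal.ofReal (lam*M) ^ p * μ A := by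
    calc ENNReal.ofReal (lam/2) ^ p * μ Q
        ≤ ∫⁻ x in Q, ENNReal.ofReal (g x) ^ p ∂μ := hI
      _ ≤ ENNReal.ofReal (lam/4) ^ p * μ Q
          + ENNReal.ofReal (lam*M) ^ p * μ A
          + ENNReal.ofReal (lam*M) ^ (-(p*ε))
              * ∫⁻ x in Q, ENNReal.ofReal (g x) ^ (p*(1+ε)) ∂μ := hint
      _ ≤ ENNReal.ofReal (lam/4) ^ p * μ Q
          + ENNReal.ofReal (lam*M) ^ p * μ A
          + ENNReal.ofReal (lam*M) ^ (-(p*ε))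
              * ((ENNReal.ofReal K * ENNReal.ofReal lam ^ (p*(1+ε))) * μ Q) := by
          exact add_le_add_right (mul_le_mul_right hJ _) _
      _ = (ENNReal.ofReal (lam/4) ^ p
            + ENNReal.ofReal (lam*M) ^ (-(p*ε))
                * (ENNReal.ofReal K * ENNReal.ofReal lam ^ (p*(1+ε)))) * μ Q
          + ENNReal.ofReal (lam*M) ^ p * μ A := by ring
      _ = ENNReal.ofReal er * μ Q + ENNReal.ofReal (lam*M) ^ p * μ A := by rw [hE]
  -- the real-number inequality
  have hreal : er + lam^p * (D/2) ≤ (lam/2)^p := by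
    have e1 : (lam/4:ℝ)^p = lam^p * (1/4:ℝ)^p := by
      rw [show lam/4 = lam*(1/4) by ring, Real.mul_rpow hlam.le (by norm_num)]
    have e2 : (lam/2:ℝ)^p = lam^p * (1/2:ℝ)^p := by
      rw [show lam/2 = lam*(1/2) by ring, Real.mul_rpow hlam.le (by norm_num)]
    have e4 : lam^(-(p*ε)) * lam^(p*(1+ε)) = lam^p := by
      rw [← Real.rpow_add hlam]
      congr 1
      ring
    have e3 : (lam*M)^(-(p*ε)) * (K * lam^(p*(1+ε))) = M^(-(p*ε)) * K * lam^p := by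
      rw [Real.mul_rpow hlam.le hM0.le]
      calc lam^(-(p*ε)) * M^(-(p*ε)) * (K * lam^(p*(1+ε)))
          = M^(-(p*ε)) * K * (lam^(-(p*ε)) * lam^(p*(1+ε))) := by ring
        _ = M^(-(p*ε)) * K * lam^p := by rw [e4]
    have e5 : M^(-(p*ε)) = (M^(p*ε))⁻¹ := by
      rw [Real.rpow_neg hM0.le]
    rw [herdef, e1, e2, e3, e5]
    have hlp : (0:ℝ) ≤ lam^p := Real.rpow_nonneg hlam.le _
    have hKM' : lam^p * ((M^(p*ε))⁻¹ * K) ≤ lam^p * (D/2) :=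
      mul_le_mul_of_nonneg_left (by linarith [hKM]) hlp
    have hDsum : (1/2:ℝ)^p = (1/4:ℝ)^p + D := by rw [hDdef]; ring
    nlinarith [hlp, hKM']
  have hbr : ENNReal.ofReal er + ENNReal.ofReal (lam^p * (D/2))
      ≤ ENNReal.ofReal (lam/2) ^ p := by
    rw [ENNReal.ofReal_rpow_of_pos (by positivity), ← ENNReal.ofReal_add her0 (by positivity)]
    exact ENNReal.ofReal_le_ofReal hreal
  -- cancel the finite term
  have hfin : ENNReal.ofReal er * μ Q ≠ ⊤ :=
    ENNReal.mul_ne_top ENNReal.ofReal_ne_top hQt'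
  have hcancel : ENNReal.ofReal (lam^p * (D/2)) * μ Q
      ≤ ENNReal.ofReal (lam*M) ^ p * μ A := by
    have step : ENNReal.ofReal er * μ Q + ENNReal.ofReal (lam^p * (D/2)) * μ Q
        ≤ ENNReal.ofReal er * μ Q + ENNReal.ofReal (lam*M) ^ p * μ A := by
      calc ENNReal.ofReal er * μ Q + ENNReal.ofReal (lam^p * (D/2)) * μ Q
          = (ENNReal.ofReal er + ENNReal.ofReal (lam^p * (D/2))) * μ Q := (add_mul _ _ _).symm
        _ ≤ ENNReal.ofReal (lam/2) ^ p * μ Q := mul_le_mul_left hbr _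
        _ ≤ _ := main
    exact (ENNReal.add_le_add_iff_left hfin).mp step
  -- divide by the positive finite constant
  set d : ℝ≥0∞ := ENNReal.ofReal (lam^p * (D/2)) with hddef
  have hd0 : d ≠ 0 := by
    rw [hddef]
    exact (ENNReal.ofReal_pos.mpr (by positivity)).ne'
  have hdt : d ≠ ⊤ := ENNReal.ofReal_ne_top
  have hsc : ENNReal.ofReal (lam*M) ^ p ≤ ENNReal.ofReal (2 * M ^ p / D) * d := by
    rw [hddef, ENNReal.ofReal_rpow_of_pos hlM,
      ← ENNReal.ofReal_mul (by positivity : (0:ℝ) ≤ 2 * M ^ p / D)]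
    apply ENNReal.ofReal_le_ofReal
    rw [Real.mul_rpow hlam.le hM0.le]
    rw [show 2 * M ^ p / D * (lam^p * (D/2)) = (M^p * lam^p) * (D / D) by ring,
      div_self hD.ne', mul_one]
    linarith [mul_nonneg (Real.rpow_nonneg hM0.le p) (Real.rpow_nonneg hlam.le p)]
  calc μ Q = d⁻¹ * (d * μ Q) := by
        rw [← mul_assoc, ENNReal.inv_mul_cancel hd0 hdt, one_mul]
    _ ≤ d⁻¹ * (ENNReal.ofReal (lam*M) ^ p * μ A) := mul_le_mul_right hcancel _
    _ ≤ d⁻¹ * ((ENNReal.ofReal (2 * M ^ p / D) * d) * μ A) :=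
        mul_le_mul_right (mul_le_mul_left hsc _) _
    _ = (d⁻¹ * d) * (ENNReal.ofReal (2 * M ^ p / D) * μ A) := by ring
    _ = ENNReal.ofReal (2 * M ^ p / D) * μ A := by
        rw [ENNReal.inv_mul_cancel hd0 hdt, one_mul]
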